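/- Let (λ_j) be an i.i.d. sequence of real random variables with the exponential distribution of rate 1, and set Γ_k = λ_1 + ⋯ + λ_k. Then for every κ > 1, the series ∑_{k=1}^∞ Γ_k^{-κ} converges almost surely. -/

import Mathlib

open MeasureTheory ProbabilityTheory Filter
open scoped ENNReal NNReal

lemma expPDF_eq : ∀ x : ℝ, gammaPDF 1 1 x
    = ((Real.toNNReal (if 0 ≤ x then Real.exp (-x) else 0)) : ℝ≥0∞) := by
  intro x
  rw [gammaPDF_eq]
  congr 1
  split_ifs with h
  · rw [Real.one_rpow, Real.Gamma_one, sub_self, Real.rpow_zero]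
    ring_nf
  · rfl

lemma expMeasure_eq_withDensity : expMeasure 1
    = volume.withDensity fun x => ((Real.toNNReal (if 0 ≤ x then Real.exp (-x) else 0)) : ℝ≥0∞) := by
  rw [expMeasure, gammaMeasure]
  exact withDensity_congr_ae (Filter.Eventually.of_forall expPDF_eq)

lemma measurable_expDensity :
    Measurable fun x : ℝ => Real.toNNReal (if 0 ≤ x then Real.exp (-x) else 0) := by
  apply Measurable.real_toNNReal
  exact Measurable.ite measurableSet_Ici (Real.measurable_exp.comp measurable_neg) measurable_const

lemma smul_expDensity_eq (x : ℝ) :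
    (Real.toNNReal (if 0 ≤ x then Real.exp (-x) else 0)) • x
      = Set.indicator (Set.Ici 0) (fun y => Real.exp (-y) * y) x := by
  rw [NNReal.smul_def, smul_eq_mul, Real.coe_toNNReal']
  by_cases h : (0:ℝ) ≤ x
  · simp [Set.indicator, h, max_eq_left (Real.exp_pos (-x)).le]
  · simp [Set.indicator, h]

lemma integrableOn_exp_mul : IntegrableOn (fun y : ℝ => Real.exp (-y) * y) (Set.Ici 0) := by
  rw [integrableOn_Ici_iff_integrableOn_Ioi]
  have := Real.GammaIntegral_convergent (s := 2) (by norm_num)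
  refine this.congr_fun (fun x hx => ?_) measurableSet_Ioi
  norm_num [Real.rpow_one]

lemma integrable_id_expMeasure : Integrable id (expMeasure 1) := by
  rw [expMeasure_eq_withDensity,
    integrable_withDensity_iff_integrable_smul measurable_expDensity]
  have : (fun x : ℝ => (Real.toNNReal (if 0 ≤ x then Real.exp (-x) else 0)) • (id x))
      = Set.indicator (Set.Ici 0) (fun y => Real.exp (-y) * y) := by
    funext x; exact smul_expDensity_eq x
  rw [this, integrable_indicator_iff measurableSet_Ici]
  exact integrableOn_exp_mul

lemma integral_id_expMeasure : ∫ x, x ∂(expMeasure 1) = 1 := by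
  rw [expMeasure_eq_withDensity,
    integral_withDensity_eq_integral_smul measurable_expDensity]
  simp_rw [smul_expDensity_eq]
  rw [integral_indicator measurableSet_Ici, MeasureTheory.integral_Ici_eq_integral_Ioi]
  have h2 : Real.Gamma 2 = ∫ x in Set.Ioi (0:ℝ), Real.exp (-x) * x ^ ((2:ℝ) - 1) :=
    Real.Gamma_eq_integral (by norm_num)
  have : (∫ x in Set.Ioi (0:ℝ), Real.exp (-x) * x)
      = ∫ x in Set.Ioi (0:ℝ), Real.exp (-x) * x ^ ((2:ℝ) - 1) := by
    refine setIntegral_congr_fun measurableSet_Ioi (fun x hx => ?_)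
    norm_num [Real.rpow_one]
  rw [this, ← h2]
  norm_num

/-- If `(λ_j)` is an i.i.d. sequence of real random variables with the
exponential distribution of rate 1 and `Γ_k = λ_1 + ⋯ + λ_k`, then for every `κ > 1` the series
`∑_{k=1}^∞ Γ_k^{-κ}` converges almost surely. -/
theorem poisson_arrival_summable_rpow
    {Ω : Type*} [MeasureSpace Ω] [IsProbabilityMeasure (ℙ : Measure Ω)]
    (lam : ℕ → Ω → ℝ)
    (hmeas : ∀ j, Measurable (lam j))
    (hindep : iIndepFun lam ℙ)
    (hlaw : ∀ j, Measure.map (lam j) ℙ = expMeasure 1)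
    (κ : ℝ) (hκ : 1 < κ) :
    ∀ᵐ ω ∂(ℙ : Measure Ω),
      Summable (fun k : ℕ => (∑ j ∈ Finset.range (k + 1), lam j ω) ^ (-κ)) := by
  -- integrability of lam 0
  have hint : Integrable (lam 0) ℙ := by
    have := integrable_id_expMeasure
    rw [← hlaw 0] at this
    exact (integrable_map_measure aestronglyMeasurable_id (hmeas 0).aemeasurable).mp this
  have hmean : (ℙ : Measure Ω)[lam 0] = 1 := by
    have : ∫ ω, lam 0 ω ∂(ℙ : Measure Ω) = ∫ x, x ∂(Measure.map (lam 0) ℙ) := by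
      exact (integral_map (hmeas 0).aemeasurable aestronglyMeasurable_id).symm
    rw [this, hlaw 0, integral_id_expMeasure]
  have hident : ∀ i, IdentDistrib (lam i) (lam 0) ℙ ℙ := fun i =>
    ⟨(hmeas i).aemeasurable, (hmeas 0).aemeasurable, by rw [hlaw i, hlaw 0]⟩
  have hpind : Pairwise (Function.onFun (IndepFun · · (ℙ : Measure Ω)) lam) :=
    fun i j hij => hindep.indepFun hij
  have hslln := strong_law_ae_real lam hint hpind hident
  rw [hmean] at hslln
  filter_upwards [hslln] with ω hω
  -- from the limit, get an eventual lower bound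
  have hev : ∀ᶠ n : ℕ in atTop, (1:ℝ)/2 < (∑ i ∈ Finset.range n, lam i ω) / n :=
    hω.eventually_const_lt (by norm_num)
  obtain ⟨N, hN⟩ := hev.exists_forall_of_atTop
  -- define S
  set S : ℕ → ℝ := fun k => ∑ j ∈ Finset.range (k + 1), lam j ω with hS
  have hSlb : ∀ k, N ≤ k + 1 → ((k:ℝ) + 1) / 2 ≤ S k := by
    intro k hk
    have h := hN (k + 1) hk
    have hpos : (0:ℝ) < (k:ℝ) + 1 := by positivity
    push_cast at h
    rw [div_lt_div_iff₀ (by norm_num) hpos] at h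
    show ((k:ℝ) + 1) / 2 ≤ ∑ j ∈ Finset.range (k + 1), lam j ω
    linarith
  -- summable comparison
  rw [← summable_nat_add_iff N]
  have hcomp : Summable (fun k : ℕ => (((k:ℝ) + N + 1) / 2) ^ (-κ)) := by
    have h1 : Summable (fun n : ℕ => (n:ℝ) ^ (-κ)) :=
      Real.summable_nat_rpow.mpr (by linarith)
    have h2 := (summable_nat_add_iff (N + 1)).mpr h1
    have h3 : (fun k : ℕ => (((k:ℝ) + N + 1) / 2) ^ (-κ))
        = fun k : ℕ => ((2:ℝ) ^ κ) * ((k + (N + 1) : ℕ) : ℝ) ^ (-κ) := by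
      funext k
      have hb : (0:ℝ) ≤ (k:ℝ) + N + 1 := by positivity
      rw [Real.div_rpow hb (by norm_num), Real.rpow_neg (by norm_num : (0:ℝ) ≤ 2)]
      push_cast
      field_simp
      ring
    rw [h3]
    exact h2.mul_left _
  refine Summable.of_nonneg_of_le (fun k => ?_) (fun k => ?_) hcomp
  · have h := hSlb (k + N) (by omega)
    exact Real.rpow_nonneg (le_trans (by positivity) h) _
  · have hlb := hSlb (k + N) (by omega)
    push_cast at hlb
    have hbpos : (0:ℝ) < ((k:ℝ) + N + 1) / 2 := by positivity
    exact Real.rpow_le_rpow_of_nonpos hbpos hlb (by linarith)
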